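/- Let G be a finite abelian group with an internal direct product decomposition G = H · K, and let H₀ be a subgroup of G such that H₀ ≅ H and G/H₀ ≅ K. Then H₀ is a direct factor of G: there exists a subgroup K₀ with H₀ · K₀ = G and H₀ ∩ K₀ = 1. -/

import Mathlib

open Subgroup

/-- cardinality of the image of the n-th power map -/
noncomputable def powCard (n : ℕ) (A : Type*) [CommGroup A] : ℕ :=
  Nat.card (powMonoidHom n : A →* A).range

lemma powCard_congr {A B : Type*} [CommGroup A] [CommGroup B] (n : ℕ) (e : A ≃* B) :
    powCard n A = powCard n B := by
  have hmap : ((powMonoidHom n : A →* A).range).map e.toMonoidHom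
      = (powMonoidHom n : B →* B).range := by
    ext b
    simp only [Subgroup.mem_map, MonoidHom.mem_range, powMonoidHom_apply]
    constructor
    · rintro ⟨_, ⟨a, rfl⟩, rfl⟩
      exact ⟨e a, (map_pow _ _ _).symm⟩
    · rintro ⟨b₀, rfl⟩
      exact ⟨(e.symm b₀) ^ n, ⟨e.symm b₀, rfl⟩, by simp [map_pow]⟩
  calc powCard n A
      = Nat.card (((powMonoidHom n : A →* A).range).map e.toMonoidHom) :=
        Nat.card_congr (Subgroup.equivMapOfInjective _ _ e.injective).toEquiv
    _ = powCard n B := by rw [hmap]; rfl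

lemma powCard_prod (A B : Type*) [CommGroup A] [CommGroup B] (n : ℕ) :
    powCard n (A × B) = powCard n A * powCard n B := by
  have hrange : (powMonoidHom n : A × B →* A × B).range
      = ((powMonoidHom n : A →* A).range).prod ((powMonoidHom n : B →* B).range) := by
    ext ⟨a, b⟩
    simp only [MonoidHom.mem_range, powMonoidHom_apply, Subgroup.mem_prod, Prod.ext_iff,
      Prod.pow_fst, Prod.pow_snd, Prod.exists]
    constructor
    · rintro ⟨x, y, hx, hy⟩; exact ⟨⟨x, hx⟩, ⟨y, hy⟩⟩
    · rintro ⟨⟨x, hx⟩, ⟨y, hy⟩⟩; exact ⟨x, y, hx, hy⟩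
  rw [powCard, hrange, Nat.card_congr (Subgroup.prodEquiv _ _).toEquiv, Nat.card_prod]; rfl

lemma Subgroup.eq_of_le_of_card_le' {G : Type*} [Group G] {S T : Subgroup G}
    (h : S ≤ T) (hT : (T : Set G).Finite) (hc : Nat.card T ≤ Nat.card S) : S = T := by
  apply SetLike.coe_injective
  exact Set.eq_of_subset_of_ncard_le h
    (by rw [← Nat.card_coe_set_eq, ← Nat.card_coe_set_eq]; exact hc) hT

/-- internal direct product iso for commutative groups -/
noncomputable def mulEquivProdOfCompl {G : Type*} [CommGroup G] (H K : Subgroup G)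
    (hHK : H ⊓ K = ⊥) (hsup : H ⊔ K = ⊤) : G ≃* H × K := by
  refine (MulEquiv.ofBijective
    ((H.subtype.comp (MonoidHom.fst H K)) * (K.subtype.comp (MonoidHom.snd H K))) ⟨?_, ?_⟩).symm
  · rintro ⟨⟨h₁, hh₁⟩, ⟨k₁, hk₁⟩⟩ ⟨⟨h₂, hh₂⟩, ⟨k₂, hk₂⟩⟩ hEq
    simp only [MonoidHom.mul_apply, MonoidHom.coe_comp, Function.comp_apply,
      MonoidHom.coe_fst, MonoidHom.coe_snd, Subgroup.coe_subtype] at hEq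
    have key : h₁ * h₂⁻¹ = k₂ * k₁⁻¹ := by
      rw [← div_eq_mul_inv, ← div_eq_mul_inv]
      rw [div_eq_div_iff_mul_eq_mul, mul_comm k₂ h₂]
      exact hEq
    have h1 : h₁ * h₂⁻¹ ∈ H ⊓ K := ⟨H.mul_mem hh₁ (H.inv_mem hh₂),
      key ▸ K.mul_mem hk₂ (K.inv_mem hk₁)⟩
    rw [hHK, Subgroup.mem_bot] at h1
    have h2 : h₁ = h₂ := by
      have := mul_eq_one_iff_eq_inv.mp h1; simpa [inv_inv] using this
    have h3 : k₁ = k₂ := by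
      rw [h1] at key
      have := (mul_eq_one_iff_eq_inv.mp key.symm); simpa [inv_inv, eq_comm] using this
    simp [Prod.ext_iff, h2, h3]
  · intro g
    have : g ∈ H ⊔ K := hsup ▸ Subgroup.mem_top g
    rw [Subgroup.mem_sup] at this
    obtain ⟨h, hh, k, hk, hgk⟩ := this
    exact ⟨(⟨h, hh⟩, ⟨k, hk⟩), hgk⟩

lemma purity {G : Type*} [CommGroup G] [Finite G] (H K H₀ : Subgroup G)
    (hHK : H ⊓ K = ⊥) (hsup : H ⊔ K = ⊤)
    (h₁ : Nonempty (H₀ ≃* H)) (h₂ : Nonempty ((G ⧸ H₀) ≃* K)) (n : ℕ) :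
    H₀ ⊓ (powMonoidHom n : G →* G).range = H₀.map (powMonoidHom n) := by
  set S := (powMonoidHom n : G →* G).range with hS
  have hle : H₀.map (powMonoidHom n) ≤ H₀ ⊓ S := by
    rintro x ⟨a, ha, rfl⟩
    exact ⟨H₀.pow_mem ha n, ⟨a, rfl⟩⟩
  set π := QuotientGroup.mk' H₀ with hπ
  set r : S →* G ⧸ H₀ := π.comp S.subtype with hr
  have h_rker : r.ker = H₀.subgroupOf S := by
    rw [hr, ← MonoidHom.comap_ker, QuotientGroup.ker_mk']
    rfl
  have card_ker : Nat.card r.ker = Nat.card (H₀ ⊓ S : Subgroup G) := by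
    rw [h_rker, ← Subgroup.inf_subgroupOf_right]
    exact Nat.card_congr (Subgroup.subgroupOfEquivOfLe inf_le_right).toEquiv
  have h_rrange : r.range = (powMonoidHom n : (G ⧸ H₀) →* _).range := by
    rw [hr, MonoidHom.range_comp, Subgroup.range_subtype]
    ext q
    simp only [Subgroup.mem_map, MonoidHom.mem_range, powMonoidHom_apply]
    constructor
    · rintro ⟨_, ⟨a, rfl⟩, rfl⟩
      exact ⟨π a, (map_pow _ _ _).symm⟩
    · rintro ⟨q', rfl⟩
      obtain ⟨g, rfl⟩ := QuotientGroup.mk'_surjective H₀ q'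
      exact ⟨g ^ n, ⟨g, rfl⟩, map_pow _ _ _⟩
  have hcount : powCard n G = Nat.card (H₀ ⊓ S : Subgroup G) * powCard n (G ⧸ H₀) := by
    calc powCard n G = Nat.card S := rfl
      _ = Nat.card (S ⧸ r.ker) * Nat.card r.ker :=
          Subgroup.card_eq_card_quotient_mul_card_subgroup r.ker
      _ = Nat.card r.range * Nat.card (H₀ ⊓ S : Subgroup G) := by
          rw [card_ker, Nat.card_congr (QuotientGroup.quotientKerEquivRange r).toEquiv]
      _ = Nat.card (H₀ ⊓ S : Subgroup G) * powCard n (G ⧸ H₀) := by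
          rw [h_rrange, mul_comm]; rfl
  have hG : powCard n G = powCard n H * powCard n K := by
    rw [powCard_congr n (mulEquivProdOfCompl H K hHK hsup), powCard_prod]
  have hQ : powCard n (G ⧸ H₀) = powCard n K := powCard_congr n h₂.some
  have hH₀card : Nat.card (H₀.map (powMonoidHom n)) = powCard n H := by
    have e1 : H₀.map (powMonoidHom n)
        = ((powMonoidHom n : H₀ →* H₀).range).map H₀.subtype := by
      ext x
      simp only [Subgroup.mem_map, MonoidHom.mem_range, powMonoidHom_apply,
        Subgroup.coe_subtype]
      constructor
      · rintro ⟨a, ha, rfl⟩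
        exact ⟨(⟨a, ha⟩ : H₀) ^ n, ⟨⟨a, ha⟩, rfl⟩, by simp⟩
      · rintro ⟨b, ⟨a, rfl⟩, rfl⟩
        exact ⟨(a : G), a.2, by simp⟩
    rw [e1, ← Nat.card_congr
      (Subgroup.equivMapOfInjective _ _ (Subgroup.subtype_injective H₀)).toEquiv]
    exact powCard_congr n h₁.some
  have hKpos : 0 < powCard n K := Nat.card_pos
  have hcards : Nat.card (H₀ ⊓ S : Subgroup G) = Nat.card (H₀.map (powMonoidHom n)) := by
    have key : Nat.card (H₀ ⊓ S : Subgroup G) * powCard n K = powCard n H * powCard n K := by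
      rw [← hQ, ← hcount, hG, hQ]
    rw [Nat.eq_of_mul_eq_mul_right hKpos key, hH₀card]
  exact (Subgroup.eq_of_le_of_card_le' hle (Set.toFinite _) (le_of_eq hcards)).symm

theorem abelian_direct_extension
    {G : Type*} [CommGroup G] [Finite G] (H K : Subgroup G)
    (hHK : H ⊓ K = ⊥) (hsup : H ⊔ K = ⊤)
    (H₀ : Subgroup G)
    (h₁ : Nonempty (H₀ ≃* H)) (h₂ : Nonempty ((G ⧸ H₀) ≃* K)) :
    ∃ K₀ : Subgroup G, H₀ ⊔ K₀ = ⊤ ∧ H₀ ⊓ K₀ = ⊥ := by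
  obtain ⟨ι, hfin, nn, hlt, ⟨φ⟩⟩ :=
    CommGroup.equiv_prod_multiplicative_zmod_of_finite (G ⧸ H₀)
  haveI := Classical.decEq ι
  set π := QuotientGroup.mk' H₀ with hπ
  have hx : ∀ i : ι, ∃ x : G, x ^ (nn i) = 1 ∧
      π x = φ.symm (Pi.mulSingle i (Multiplicative.ofAdd (1 : ZMod (nn i)))) := by
    intro i
    set q := φ.symm (Pi.mulSingle i (Multiplicative.ofAdd (1 : ZMod (nn i)))) with hq
    obtain ⟨g, hg⟩ := QuotientGroup.mk'_surjective H₀ q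
    have hqn : q ^ (nn i) = 1 := by
      rw [hq, ← map_pow]
      have : (Pi.mulSingle i (Multiplicative.ofAdd (1 : ZMod (nn i))) :
            ∀ j, Multiplicative (ZMod (nn j))) ^ (nn i)
          = Pi.mulSingle i ((Multiplicative.ofAdd (1 : ZMod (nn i))) ^ (nn i)) :=
        (map_pow (MonoidHom.mulSingle (fun j => Multiplicative (ZMod (nn j))) i)
          (Multiplicative.ofAdd (1 : ZMod (nn i))) (nn i)).symm
      rw [this, ← ofAdd_nsmul]
      have h0 : (nn i) • (1 : ZMod (nn i)) = 0 := by
        rw [nsmul_eq_mul, mul_one, ZMod.natCast_self]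
      rw [h0]
      simp
    have hmem : g ^ (nn i) ∈ H₀ ⊓ (powMonoidHom (nn i) : G →* G).range := by
      constructor
      · have hp : π (g ^ nn i) = 1 := by rw [map_pow, hg, hqn]
        exact (by simpa only [hπ, QuotientGroup.mk'_apply, QuotientGroup.eq_one_iff] using hp : g ^ nn i ∈ H₀)
      · exact ⟨g, rfl⟩
    rw [purity H K H₀ hHK hsup h₁ h₂ (nn i)] at hmem
    obtain ⟨a, ha, han⟩ := hmem
    have han' : a ^ (nn i) = g ^ (nn i) := han
    refine ⟨g * a⁻¹, ?_, ?_⟩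
    · rw [mul_pow, inv_pow, han', mul_inv_cancel]
    · have hπa : π a = 1 := by
        simpa only [hπ, QuotientGroup.mk'_apply, QuotientGroup.eq_one_iff, SetLike.mem_coe] using ha
      rw [map_mul, map_inv, hπa, inv_one, mul_one, hg]
  choose x hx1 hx2 using hx
  have hxz : ∀ i : ι, (zmultiplesHom (Additive G) (Additive.ofMul (x i))) ((nn i : ℤ)) = 0 := by
    intro i
    show ((nn i : ℤ)) • Additive.ofMul (x i) = 0
    rw [← ofMul_zpow, zpow_natCast, hx1]
    rfl
  let s' : ∀ i : ι, Multiplicative (ZMod (nn i)) →* G := fun i =>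
    AddMonoidHom.toMultiplicativeLeft
      (ZMod.lift (nn i) ⟨zmultiplesHom (Additive G) (Additive.ofMul (x i)), hxz i⟩)
  have hs'one : ∀ i, s' i (Multiplicative.ofAdd (1 : ZMod (nn i))) = x i := by
    intro i
    have h1 : ((1 : ZMod (nn i))) = ((1 : ℤ) : ZMod (nn i)) := by norm_cast
    simp only [s', AddMonoidHom.coe_toMultiplicativeLeft, Function.comp_apply, toAdd_ofAdd, h1,
      ZMod.lift_coe]
    show Additive.toMul ((1 : ℤ) • Additive.ofMul (x i)) = x i
    rw [one_zsmul]
    rfl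
  let s : (∀ i, Multiplicative (ZMod (nn i))) →* G :=
    ∏ i, (s' i).comp (Pi.evalMonoidHom (fun j => Multiplicative (ZMod (nn j))) i)
  have hssingle : ∀ (i) (v : Multiplicative (ZMod (nn i))),
      s (Pi.mulSingle i v) = s' i v := by
    intro i v
    show (∏ j, (s' j).comp (Pi.evalMonoidHom _ j)) (Pi.mulSingle i v) = s' i v
    rw [MonoidHom.finset_prod_apply]
    rw [Finset.prod_eq_single i]
    · simp
    · intro j _ hj
      simp [Pi.mulSingle_eq_of_ne hj]
    · intro h
      exact absurd (Finset.mem_univ i) h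
  have hπs : ∀ (i) (v : Multiplicative (ZMod (nn i))),
      π (s (Pi.mulSingle i v)) = φ.symm (Pi.mulSingle i v) := by
    intro i v
    haveI : NeZero (nn i) := ⟨by have := hlt i; omega⟩
    set k := (Multiplicative.toAdd v).val with hk
    have hv : v = (Multiplicative.ofAdd (1 : ZMod (nn i))) ^ k := by
      rw [← ofAdd_nsmul]
      have : k • (1 : ZMod (nn i)) = Multiplicative.toAdd v := by
        rw [nsmul_eq_mul, mul_one, hk]
        exact ZMod.natCast_rightInverse (Multiplicative.toAdd v)
      rw [this]
      rfl
    have hsingle_pow : (Pi.mulSingle i ((Multiplicative.ofAdd (1 : ZMod (nn i))) ^ k) :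
          ∀ j, Multiplicative (ZMod (nn j)))
        = (Pi.mulSingle i (Multiplicative.ofAdd (1 : ZMod (nn i)))) ^ k :=
      map_pow (MonoidHom.mulSingle (fun j => Multiplicative (ZMod (nn j))) i)
        (Multiplicative.ofAdd (1 : ZMod (nn i))) k
    rw [hv, hsingle_pow, map_pow, map_pow, hssingle, hs'one, hx2, ← map_pow, ← hsingle_pow]
  have hsec : ∀ qq : G ⧸ H₀, π (s (φ qq)) = qq := by
    have hcomp : π.comp s = φ.symm.toMonoidHom := by
      refine MonoidHom.functions_ext _ _ _ (fun i v => ?_)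
      simpa using hπs i v
    intro qq
    have := DFunLike.congr_fun hcomp (φ qq)
    simpa using this
  refine ⟨(s.comp φ.toMonoidHom).range, ?_, ?_⟩
  · rw [eq_top_iff]
    intro g _
    rw [Subgroup.mem_sup]
    refine ⟨g * (s (φ (π g)))⁻¹, ?_, s (φ (π g)), ⟨π g, rfl⟩, by group⟩
    have hp : π (g * (s (φ (π g)))⁻¹) = 1 := by
      rw [map_mul, map_inv, hsec, mul_inv_cancel]
    simpa only [hπ, QuotientGroup.mk'_apply, QuotientGroup.eq_one_iff] using hp
  · rw [eq_bot_iff]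
    rintro g hg
    rw [Subgroup.mem_inf] at hg
    obtain ⟨hg₀, hgr⟩ := hg
    obtain ⟨qq, rfl⟩ := MonoidHom.mem_range.mp hgr
    have h1 : π (s (φ qq)) = 1 := by
      have : (s.comp φ.toMonoidHom) qq ∈ H₀ := hg₀
      simpa only [hπ, QuotientGroup.mk'_apply, QuotientGroup.eq_one_iff, MonoidHom.coe_comp,
        Function.comp_apply, MulEquiv.coe_toMonoidHom] using
        ((QuotientGroup.eq_one_iff _).mpr this)
    rw [hsec] at h1
    rw [Subgroup.mem_bot]
    show s (φ qq) = 1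
    rw [h1, map_one, map_one]
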